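/- Let 3 ≤ t ≤ w < n and suppose a Steiner system S(t,w,n) exists. Then the smallest integer q for which an (n, C(n,t)/C(w,t), w, 2w−t+1)_q code exists is at most C(n−1,t−1)/C(w−1,t−1) − C(n−t+2,2)/C(w−t+2,2) + 1 + min over all Steiner systems S of type S(t,w,n) on an n-element point set of ( max over all (t−2)-element subsets α of the points of χ(D_α(S)) ), where D_α(S) is the S(2,w−t+2,n−t+2) derived from S at α and χ denotes the chromatic number of its minimum-distance graph. -/

import Mathlib

/-- The support of a word over the alphabet `{0, ..., q-1}` (represented as
naturals below `q`): the set of coordinates with nonzero entries. -/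
def suppN {n : ℕ} (x : Fin n → ℕ) : Finset (Fin n) :=
  Finset.univ.filter (fun i => x i ≠ 0)

/-- An `(n, M, w, d)_q` constant-weight code. -/
def IsCWCode (n M w d q : ℕ) (C : Finset (Fin n → ℕ)) : Prop :=
  C.card = M ∧ (∀ x ∈ C, ∀ i, x i < q) ∧ (∀ x ∈ C, (suppN x).card = w) ∧
  ∀ x ∈ C, ∀ y ∈ C, x ≠ y → d ≤ hammingDist x y

/-- A Steiner system `S(t, k, n)` on the point set `Fin n`. -/
def IsSteiner {n : ℕ} (t k : ℕ) (B : Finset (Finset (Fin n))) : Prop :=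
  (∀ b ∈ B, b.card = k) ∧
  ∀ s : Finset (Fin n), s.card = t → ∃! b, b ∈ B ∧ s ⊆ b

/-- The block set of the system derived from `B` at the point set `α`. -/
def derivedBlocks {n : ℕ} (B : Finset (Finset (Fin n))) (α : Finset (Fin n)) :
    Finset (Finset (Fin n)) :=
  (B.filter (fun b => α ⊆ b)).image (fun b => b \ α)

/-- The minimum-distance graph of (the block set of) an `S(2,k',n')`: blocks
are adjacent iff they intersect in exactly one point. -/
def mdGraph {n : ℕ} (D : Finset (Finset (Fin n))) :
    SimpleGraph {b : Finset (Fin n) // b ∈ D} where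
  Adj a b := a ≠ b ∧ (a.val ∩ b.val).card = 1
  symm := ⟨fun a b h => ⟨h.1.symm, by rw [Finset.inter_comm]; exact h.2⟩⟩
  loopless := ⟨fun a h => h.1 rfl⟩

/-- The chromatic number (as a natural number) of a graph. -/
noncomputable def chromNum {V : Type*} (G : SimpleGraph V) : ℕ :=
  G.chromaticNumber.toNat

open Finset in

lemma card_supersets {γ : Type*} [DecidableEq γ] (u A : Finset γ) (k : ℕ)
    (hAu : A ⊆ u) (hAk : A.card ≤ k) :
    ((u.powersetCard k).filter (fun s => A ⊆ s)).card = (u.card - A.card).choose (k - A.card) := by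
  rw [← Finset.card_sdiff_of_subset hAu, ← Finset.card_powersetCard (k - A.card) (u \ A)]
  apply Finset.card_bij' (fun s _ => s \ A) (fun v _ => v ∪ A)
  · intro s hs
    rw [Finset.mem_filter, Finset.mem_powersetCard] at hs
    rw [Finset.mem_powersetCard]
    exact ⟨Finset.sdiff_subset_sdiff hs.1.1 le_rfl,
      by rw [Finset.card_sdiff_of_subset hs.2, hs.1.2]⟩
  · intro v hv
    rw [Finset.mem_powersetCard] at hv
    have hdisj : Disjoint v A := Finset.disjoint_of_subset_left hv.1 Finset.sdiff_disjoint
    rw [Finset.mem_filter, Finset.mem_powersetCard]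
    refine ⟨⟨Finset.union_subset (hv.1.trans Finset.sdiff_subset) hAu, ?_⟩,
      Finset.subset_union_right⟩
    rw [Finset.card_union_of_disjoint hdisj, hv.2]
    omega
  · intro s hs
    rw [Finset.mem_filter] at hs
    exact Finset.sdiff_union_of_subset hs.2
  · intro v hv
    rw [Finset.mem_powersetCard] at hv
    have hdisj : Disjoint v A := Finset.disjoint_of_subset_left hv.1 Finset.sdiff_disjoint
    rw [Finset.union_sdiff_distrib, Finset.sdiff_self, Finset.union_empty,
      Finset.sdiff_eq_self_iff_disjoint.mpr hdisj]

lemma steiner_inter {n t w : ℕ} {B : Finset (Finset (Fin n))} (hB : IsSteiner t w B)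
    {b b' : Finset (Fin n)} (hb : b ∈ B) (hb' : b' ∈ B) (hne : b ≠ b') :
    (b ∩ b').card < t := by
  by_contra h
  push_neg at h
  obtain ⟨s, hs, hcard⟩ := Finset.exists_subset_card_eq h
  obtain ⟨u, -, huniq⟩ := hB.2 s hcard
  exact hne ((huniq b ⟨hb, hs.trans Finset.inter_subset_left⟩).trans
    (huniq b' ⟨hb', hs.trans Finset.inter_subset_right⟩).symm)

lemma steiner_count {n t w : ℕ} {B : Finset (Finset (Fin n))} (hB : IsSteiner t w B)
    (A : Finset (Fin n)) (hAt : A.card ≤ t) :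
    (B.filter (fun b => A ⊆ b)).card * (w - A.card).choose (t - A.card)
      = (n - A.card).choose (t - A.card) := by
  classical
  set f : Finset (Fin n) → Finset (Fin n) := fun s =>
    if h : s.card = t then (hB.2 s h).choose else ∅ with hf
  have hfspec : ∀ s : Finset (Fin n), s.card = t →
      (f s ∈ B ∧ s ⊆ f s) ∧ ∀ y, y ∈ B ∧ s ⊆ y → y = f s := by
    intro s h
    rw [hf]
    simp only [dif_pos h]
    exact ⟨(hB.2 s h).choose_spec.1, (hB.2 s h).choose_spec.2⟩
  have hmaps : ∀ s ∈ (Finset.univ.powersetCard t).filter (fun s => A ⊆ s),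
      f s ∈ B.filter (fun b => A ⊆ b) := by
    intro s hs
    rw [Finset.mem_filter, Finset.mem_powersetCard] at hs
    obtain ⟨⟨-, hcard⟩, hA⟩ := hs
    exact Finset.mem_filter.mpr ⟨(hfspec s hcard).1.1, hA.trans (hfspec s hcard).1.2⟩
  have hcount := Finset.card_eq_sum_card_fiberwise hmaps
  have hT : (((Finset.univ : Finset (Fin n)).powersetCard t).filter (fun s => A ⊆ s)).card
      = (n - A.card).choose (t - A.card) := by
    have := card_supersets (Finset.univ : Finset (Fin n)) A t (Finset.subset_univ _) hAt
    simpa using this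
  have hfiber : ∀ b ∈ B.filter (fun b => A ⊆ b),
      ((((Finset.univ : Finset (Fin n)).powersetCard t).filter (fun s => A ⊆ s)).filter
        (fun s => f s = b)).card = (w - A.card).choose (t - A.card) := by
    intro b hb
    rw [Finset.mem_filter] at hb
    have hbcard := hB.1 b hb.1
    have hfset : (((Finset.univ : Finset (Fin n)).powersetCard t).filter (fun s => A ⊆ s)).filter
        (fun s => f s = b) = (b.powersetCard t).filter (fun s => A ⊆ s) := by
      ext s
      simp only [Finset.mem_filter, Finset.mem_powersetCard, Finset.subset_univ, true_and]
      constructor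
      · rintro ⟨⟨hcard, hA⟩, hfs⟩
        exact ⟨⟨hfs ▸ (hfspec s hcard).1.2, hcard⟩, hA⟩
      · rintro ⟨⟨hsb, hcard⟩, hA⟩
        exact ⟨⟨hcard, hA⟩, ((hfspec s hcard).2 b ⟨hb.1, hsb⟩).symm⟩
    rw [hfset, card_supersets b A t hb.2 hAt, hbcard]
  rw [Finset.sum_congr rfl hfiber, Finset.sum_const, smul_eq_mul] at hcount
  rw [← hcount, hT]

def winF (n t : ℕ) (p : Fin n) : Finset (Fin n) :=
  (Finset.range (t - 2)).image fun j =>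
    ⟨(p.1 + j) % n, Nat.mod_lt _ (Nat.lt_of_le_of_lt (Nat.zero_le _) p.2)⟩

lemma mem_winF {n t : ℕ} {p x : Fin n} :
    x ∈ winF n t p ↔ ∃ j < t - 2, x.1 = (p.1 + j) % n := by
  simp only [winF, Finset.mem_image, Finset.mem_range, Fin.ext_iff]
  constructor
  · rintro ⟨j, hj, h⟩; exact ⟨j, hj, h.symm⟩
  · rintro ⟨j, hj, h⟩; exact ⟨j, hj, h.symm⟩

lemma winF_card {n t : ℕ} (htn : t - 2 ≤ n) (p : Fin n) : (winF n t p).card = t - 2 := by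
  rw [winF, Finset.card_image_of_injOn, Finset.card_range]
  intro j hj j' hj' h
  simp only [Finset.coe_range, Set.mem_Iio] at hj hj'
  have hval : (p.1 + j) % n = (p.1 + j') % n := congrArg Fin.val h
  have hmod : j % n = j' % n := Nat.ModEq.add_left_cancel' p.1 hval
  rwa [Nat.mod_eq_of_lt (by omega), Nat.mod_eq_of_lt (by omega)] at hmod

lemma mem_winF_self {n t : ℕ} (ht : 3 ≤ t) (p : Fin n) : p ∈ winF n t p := by
  rw [mem_winF]
  exact ⟨0, by omega, by rw [Nat.add_zero, Nat.mod_eq_of_lt p.2]⟩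

lemma winF_pred_not_mem {n t : ℕ} (htn : t - 2 < n) (q : Fin n) :
    (⟨(q.1 + (n - 1)) % n, Nat.mod_lt _ (Nat.lt_of_le_of_lt (Nat.zero_le _) q.2)⟩ : Fin n)
      ∉ winF n t q := by
  intro hq
  rw [mem_winF] at hq
  obtain ⟨j, hj, hval⟩ := hq
  have hmod : (n - 1) % n = j % n := Nat.ModEq.add_left_cancel' q.1 hval
  have hn : 0 < n := Nat.lt_of_le_of_lt (Nat.zero_le _) q.2
  rw [Nat.mod_eq_of_lt (by omega), Nat.mod_eq_of_lt (by omega)] at hmod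
  omega

lemma winF_inj {n t : ℕ} (ht : 3 ≤ t) (htn : t - 2 < n) {p p' : Fin n}
    (h : winF n t p = winF n t p') : p = p' := by
  have hp' : p' ∈ winF n t p := h ▸ mem_winF_self ht p'
  rw [mem_winF] at hp'
  obtain ⟨j, hj, hval⟩ := hp'
  rcases Nat.eq_zero_or_pos j with hj0 | hj0
  · subst hj0
    exact (Fin.ext (by rw [hval, Nat.add_zero, Nat.mod_eq_of_lt p.2])).symm
  · exfalso
    apply winF_pred_not_mem htn p'
    rw [h.symm, mem_winF]
    refine ⟨j - 1, by omega, ?_⟩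
    show (p'.1 + (n - 1)) % n = (p.1 + (j - 1)) % n
    rw [hval, Nat.mod_add_mod]
    have he : p.1 + j + (n - 1) = (p.1 + (j - 1)) + n := by omega
    rw [he, Nat.add_mod_right]

noncomputable def cw (n t m : ℕ) (B : Finset (Finset (Fin n)))
    (col : ∀ α : Finset (Fin n), {d // d ∈ derivedBlocks B α} → ℕ)
    (b : Finset (Fin n)) (p : Fin n) : ℕ :=
  if h : b ∈ B ∧ p ∈ b then
    if h2 : winF n t p ⊆ b then
      col (winF n t p) ⟨b \ winF n t p, by
        unfold derivedBlocks
        exact Finset.mem_image_of_mem _ (Finset.mem_filter.mpr ⟨h.1, h2⟩)⟩ + 1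
    else m + 1 + ((B.filter fun c => p ∈ c ∧ ¬ winF n t p ⊆ c).equivFin
        ⟨b, Finset.mem_filter.mpr ⟨h.1, h.2, h2⟩⟩ : Fin _).1
  else 0

lemma cw_eq_zero {n t m : ℕ} {B : Finset (Finset (Fin n))} {col} {b : Finset (Fin n)}
    {p : Fin n} (hp : p ∉ b) : cw n t m B col b p = 0 := by
  rw [cw, dif_neg (fun hc => hp hc.2)]

lemma cw_pos {n t m : ℕ} {B : Finset (Finset (Fin n))} {col} {b : Finset (Fin n)}
    {p : Fin n} (hb : b ∈ B) (hp : p ∈ b) : 0 < cw n t m B col b p := by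
  rw [cw, dif_pos ⟨hb, hp⟩]
  split_ifs <;> omega

lemma cw_supp {n t m : ℕ} {B : Finset (Finset (Fin n))} {col} {b : Finset (Fin n)}
    (hb : b ∈ B) : suppN (cw n t m B col b) = b := by
  ext p
  simp only [suppN, Finset.mem_filter, Finset.mem_univ, true_and]
  constructor
  · intro h
    by_contra hp
    exact h (cw_eq_zero hp)
  · intro hp
    exact (cw_pos hb hp).ne'

lemma cw_agree {n t w m : ℕ} {B : Finset (Finset (Fin n))}
    {col : ∀ α : Finset (Fin n), {d // d ∈ derivedBlocks B α} → ℕ}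
    (hB : IsSteiner t w B) (ht : 3 ≤ t) (htn : t - 2 ≤ n)
    (hcol1 : ∀ (α : Finset (Fin n)) (d d' : {x // x ∈ derivedBlocks B α}),
      d ≠ d' → (d.1 ∩ d'.1).card = 1 → col α d ≠ col α d')
    (hcolb : ∀ (p : Fin n) (d : {x // x ∈ derivedBlocks B (winF n t p)}),
      col (winF n t p) d < m)
    {b b' : Finset (Fin n)} (hb : b ∈ B) (hb' : b' ∈ B) (hne : b ≠ b')
    {p : Fin n} (hp : p ∈ b) (hp' : p ∈ b')
    (heq : cw n t m B col b p = cw n t m B col b' p) : b ∩ b' = winF n t p := by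
  rw [cw, cw, dif_pos (show b ∈ B ∧ p ∈ b from ⟨hb, hp⟩),
    dif_pos (show b' ∈ B ∧ p ∈ b' from ⟨hb', hp'⟩)] at heq
  by_cases h2 : winF n t p ⊆ b <;> by_cases h2' : winF n t p ⊆ b'
  · rw [dif_pos h2, dif_pos h2'] at heq
    have hded : b \ winF n t p ≠ b' \ winF n t p := by
      intro hdd
      apply hne
      have hbu := Finset.sdiff_union_of_subset h2
      have hbu' := Finset.sdiff_union_of_subset h2'
      rw [← hbu, ← hbu', hdd]
    have hcoleq := Nat.add_right_cancel heq
    have hcard1 : ((b \ winF n t p) ∩ (b' \ winF n t p)).card ≠ 1 := fun hc =>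
      hcol1 (winF n t p) _ _ (fun hx => hded (congrArg Subtype.val hx)) hc hcoleq
    have hinter : (b \ winF n t p) ∩ (b' \ winF n t p) = (b ∩ b') \ winF n t p := by
      ext x
      simp only [Finset.mem_inter, Finset.mem_sdiff]
      tauto
    rw [hinter] at hcard1
    have hsub : winF n t p ⊆ b ∩ b' := Finset.subset_inter h2 h2'
    have hlt : (b ∩ b').card < t := steiner_inter hB hb hb' hne
    have hwcard : (winF n t p).card = t - 2 := winF_card htn p
    have hsd : ((b ∩ b') \ winF n t p).card = (b ∩ b').card - (t - 2) := by
      rw [Finset.card_sdiff_of_subset hsub, hwcard]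
    have hsc : (winF n t p).card ≤ (b ∩ b').card := Finset.card_le_card hsub
    have h0 : ((b ∩ b') \ winF n t p).card = 0 := by omega
    exact Finset.Subset.antisymm (Finset.sdiff_eq_empty_iff_subset.mp
      (Finset.card_eq_zero.mp h0)) hsub
  · rw [dif_pos h2, dif_neg h2'] at heq
    have := hcolb p ⟨b \ winF n t p, by
      unfold derivedBlocks
      exact Finset.mem_image_of_mem _ (Finset.mem_filter.mpr ⟨hb, h2⟩)⟩
    omega
  · rw [dif_neg h2, dif_pos h2'] at heq
    have := hcolb p ⟨b' \ winF n t p, by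
      unfold derivedBlocks
      exact Finset.mem_image_of_mem _ (Finset.mem_filter.mpr ⟨hb', h2'⟩)⟩
    omega
  · rw [dif_neg h2, dif_neg h2'] at heq
    exfalso
    apply hne
    have hv : ((B.filter fun c => p ∈ c ∧ ¬ winF n t p ⊆ c).equivFin
          ⟨b, Finset.mem_filter.mpr ⟨hb, hp, h2⟩⟩ : Fin _)
        = ((B.filter fun c => p ∈ c ∧ ¬ winF n t p ⊆ c).equivFin
          ⟨b', Finset.mem_filter.mpr ⟨hb', hp', h2'⟩⟩ : Fin _) := by
      apply Fin.ext
      omega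
    have := (Finset.equivFin _).injective hv
    exact congrArg Subtype.val this

theorem aux_code (n w t : ℕ) (ht : 3 ≤ t) (htw : t ≤ w) (hwn : w < n)
    (B : Finset (Finset (Fin n))) (hB : IsSteiner t w B) (m : ℕ)
    (hm : ∀ p : Fin n, chromNum (mdGraph (derivedBlocks B (winF n t p))) ≤ m) :
    ∃ C : Finset (Fin n → ℕ),
      IsCWCode n (Nat.choose n t / Nat.choose w t) w (2 * w - t + 1)
        (Nat.choose (n - 1) (t - 1) / Nat.choose (w - 1) (t - 1)
          - Nat.choose (n - t + 2) 2 / Nat.choose (w - t + 2) 2 + 1 + m) C := by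
  classical
  have hcolx : ∃ col : ∀ α : Finset (Fin n), ({d // d ∈ derivedBlocks B α} → ℕ),
      (∀ (α : Finset (Fin n)) (d d' : {x // x ∈ derivedBlocks B α}),
        d ≠ d' → (d.1 ∩ d'.1).card = 1 → col α d ≠ col α d') ∧
      (∀ α d, col α d < chromNum (mdGraph (derivedBlocks B α))) := by
    refine ⟨fun α d =>
      ((mdGraph (derivedBlocks B α)).colorable_chromaticNumber_of_fintype.some d).val, ?_, ?_⟩
    · intro α d d' h1 hc heq
      exact (mdGraph (derivedBlocks B α)).colorable_chromaticNumber_of_fintype.some.valid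
        (show (mdGraph (derivedBlocks B α)).Adj d d' from And.intro h1 hc) (Fin.val_injective heq)
    · intro α d
      exact ((mdGraph (derivedBlocks B α)).colorable_chromaticNumber_of_fintype.some d).isLt
  obtain ⟨col, hcol1, hcol2⟩ := hcolx
  set R := Nat.choose (n - 1) (t - 1) / Nat.choose (w - 1) (t - 1) with hR
  set S := Nat.choose (n - t + 2) 2 / Nat.choose (w - t + 2) 2 with hSdef
  have htn : t - 2 ≤ n := by omega
  have htn' : t - 2 < n := by omega
  have hcolb : ∀ (p : Fin n) (d : {x // x ∈ derivedBlocks B (winF n t p)}),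
      col (winF n t p) d < m := fun p d => lt_of_lt_of_le (hcol2 _ d) (hm p)
  have hAcount : ∀ p : Fin n, (B.filter (fun c => p ∈ c)).card = R := by
    intro p
    have h1 := steiner_count hB {p} (by rw [Finset.card_singleton]; omega)
    rw [Finset.card_singleton] at h1
    have hfe : B.filter (fun c => {p} ⊆ c) = B.filter (fun c => p ∈ c) := by
      apply Finset.filter_congr
      intro c _
      simp [Finset.singleton_subset_iff]
    rw [hfe] at h1
    rw [hR]
    exact (Nat.div_eq_of_eq_mul_left (Nat.choose_pos (by omega)) h1.symm).symm
  have hScount : ∀ p : Fin n, (B.filter (fun c => winF n t p ⊆ c)).card = S := by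
    intro p
    have h1 := steiner_count hB (winF n t p) (by rw [winF_card htn]; omega)
    rw [winF_card htn, show w - (t - 2) = w - t + 2 from by omega,
      show t - (t - 2) = 2 from by omega, show n - (t - 2) = n - t + 2 from by omega] at h1
    rw [hSdef]
    exact (Nat.div_eq_of_eq_mul_left (Nat.choose_pos (by omega)) h1.symm).symm
  have hTcount : ∀ p : Fin n, (B.filter fun c => p ∈ c ∧ ¬ winF n t p ⊆ c).card = R - S := by
    intro p
    have hsplit : B.filter (fun c => p ∈ c ∧ ¬ winF n t p ⊆ c)
        = (B.filter (fun c => p ∈ c)) \ (B.filter (fun c => winF n t p ⊆ c)) := by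
      ext c
      simp only [Finset.mem_filter, Finset.mem_sdiff]
      tauto
    have hss : (B.filter (fun c => winF n t p ⊆ c)) ⊆ (B.filter (fun c => p ∈ c)) := by
      intro c hc
      rw [Finset.mem_filter] at hc ⊢
      exact ⟨hc.1, hc.2 (mem_winF_self ht p)⟩
    rw [hsplit, Finset.card_sdiff_of_subset hss, hAcount, hScount]
  have hween : ∀ b ∈ B, ∀ p : Fin n, cw n t m B col b p < R - S + 1 + m := by
    intro b hb p
    rw [cw]
    split_ifs with h1 h2
    · exact lt_of_lt_of_le (Nat.succ_lt_succ (hcolb p _)) (by omega)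
    · exact lt_of_lt_of_le (Nat.add_lt_add_left (Fin.is_lt _) (m + 1))
        (by rw [hTcount p]; omega)
    · omega
  have hdist : ∀ b ∈ B, ∀ b' ∈ B, b ≠ b' →
      2 * w - t + 1 ≤ hammingDist (cw n t m B col b) (cw n t m B col b') := by
    intro b hb b' hb' hne
    set E := (b ∩ b').filter (fun p => cw n t m B col b p = cw n t m B col b' p) with hE
    have hagree : ∀ p ∈ E, b ∩ b' = winF n t p := by
      intro p hp
      rw [hE, Finset.mem_filter, Finset.mem_inter] at hp
      exact cw_agree hB ht htn hcol1 hcolb hb hb' hne hp.1.1 hp.1.2 hp.2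
    have hEcard : E.card ≤ 1 := by
      rw [Finset.card_le_one]
      intro p hp p' hp'
      exact winF_inj ht htn' ((hagree p hp).symm.trans (hagree p' hp'))
    have hi_lt : (b ∩ b').card < t := steiner_inter hB hb hb' hne
    have hia : (b ∩ b').card + E.card ≤ t - 1 := by
      rcases Finset.eq_empty_or_nonempty E with hE0 | ⟨p, hp⟩
      · rw [hE0, Finset.card_empty]
        omega
      · have hag := hagree p hp
        have hic : (b ∩ b').card = t - 2 := by rw [hag, winF_card htn]
        omega
    have hbw := hB.1 b hb
    have hbw' := hB.1 b' hb'
    have hsub : (b \ b') ∪ ((b' \ b) ∪ ((b ∩ b') \ E)) ⊆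
        Finset.univ.filter (fun p => cw n t m B col b p ≠ cw n t m B col b' p) := by
      intro p hp
      rw [Finset.mem_union, Finset.mem_union] at hp
      rw [Finset.mem_filter]
      refine ⟨Finset.mem_univ _, ?_⟩
      rcases hp with hp | hp | hp
      · rw [Finset.mem_sdiff] at hp
        have hpos := cw_pos (col := col) (m := m) (t := t) hb hp.1
        rw [cw_eq_zero (col := col) (m := m) (t := t) (B := B) hp.2]
        omega
      · rw [Finset.mem_sdiff] at hp
        have hpos := cw_pos (col := col) (m := m) (t := t) hb' hp.1
        rw [cw_eq_zero (col := col) (m := m) (t := t) (B := B) hp.2]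
        omega
      · rw [hE, Finset.mem_sdiff, Finset.mem_filter] at hp
        exact fun hc => hp.2 ⟨hp.1, hc⟩
    have hd1 : Disjoint (b \ b') ((b' \ b) ∪ ((b ∩ b') \ E)) := by
      rw [Finset.disjoint_union_right]
      refine ⟨disjoint_sdiff_sdiff, ?_⟩
      rw [Finset.disjoint_left]
      intro a ha ha'
      rw [Finset.mem_sdiff] at ha
      rw [Finset.mem_sdiff, Finset.mem_inter] at ha'
      exact ha.2 ha'.1.2
    have hd2 : Disjoint (b' \ b) ((b ∩ b') \ E) := by
      rw [Finset.disjoint_left]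
      intro a ha ha'
      rw [Finset.mem_sdiff] at ha
      rw [Finset.mem_sdiff, Finset.mem_inter] at ha'
      exact ha.2 ha'.1.1
    have hiw : (b ∩ b').card ≤ w := hbw ▸ Finset.card_le_card Finset.inter_subset_left
    have hEsub : E ⊆ b ∩ b' := Finset.filter_subset _ _
    have hEi : E.card ≤ (b ∩ b').card := Finset.card_le_card hEsub
    have hc1 : (b \ b').card + (b ∩ b').card = w := by
      rw [Finset.card_sdiff_add_card_inter, hbw]
    have hc2 : (b' \ b).card + (b ∩ b').card = w := by
      have h := Finset.card_sdiff_add_card_inter b' b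
      rwa [Finset.inter_comm b' b, hbw'] at h
    have hc3 : ((b ∩ b') \ E).card = (b ∩ b').card - E.card := Finset.card_sdiff_of_subset hEsub
    have hcard : ((b \ b') ∪ ((b' \ b) ∪ ((b ∩ b') \ E))).card
        = (b \ b').card + ((b' \ b).card + ((b ∩ b') \ E).card) := by
      rw [Finset.card_union_of_disjoint hd1, Finset.card_union_of_disjoint hd2]
    have hle := Finset.card_le_card hsub
    rw [hcard] at hle
    have hham : hammingDist (cw n t m B col b) (cw n t m B col b')
        = (Finset.univ.filter (fun p => cw n t m B col b p ≠ cw n t m B col b' p)).card := by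
      rfl
    rw [hham]
    omega
  refine ⟨B.image (cw n t m B col), ?_, ?_, ?_, ?_⟩
  · have hinj : Set.InjOn (cw n t m B col) B := by
      intro a ha a' ha' hcw
      have h := congrArg suppN hcw
      rwa [cw_supp ha, cw_supp ha'] at h
    rw [Finset.card_image_of_injOn hinj]
    have h0 := steiner_count hB ∅ (by simp)
    simp only [Finset.card_empty, Nat.sub_zero] at h0
    rw [Finset.filter_true_of_mem (fun b _ => Finset.empty_subset b)] at h0
    exact (Nat.div_eq_of_eq_mul_left (Nat.choose_pos htw) h0.symm).symm
  · intro x hx i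
    obtain ⟨b, hb, rfl⟩ := Finset.mem_image.mp hx
    exact hween b hb i
  · intro x hx
    obtain ⟨b, hb, rfl⟩ := Finset.mem_image.mp hx
    rw [cw_supp hb]
    exact hB.1 b hb
  · intro x hx y hy hxy
    obtain ⟨b, hb, rfl⟩ := Finset.mem_image.mp hx
    obtain ⟨b', hb', rfl⟩ := Finset.mem_image.mp hy
    exact hdist b hb b' hb' (fun hc => hxy (congrArg _ hc))

/-- If an `S(t,w,n)` exists (`t ≥ 3`), then the smallest `q` for which an
`(n, C(n,t)/C(w,t), w, 2w-t+1)_q` code exists is at most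
`C(n-1,t-1)/C(w-1,t-1) - C(n-t+2,2)/C(w-t+2,2) + 1` plus the minimum over all
`S(t,w,n)` systems `S` of the maximum over `(t-2)`-subsets `α` of the points
of the chromatic number of the minimum-distance graph of the system derived
from `S` at `α`. -/
theorem stmt_12 (n w t : ℕ) (ht : 3 ≤ t) (htw : t ≤ w) (hwn : w < n)
    (B0 : Finset (Finset (Fin n))) (hB0 : IsSteiner t w B0) :
    ∃ q : ℕ,
      q ≤ Nat.choose (n - 1) (t - 1) / Nat.choose (w - 1) (t - 1)
          - Nat.choose (n - t + 2) 2 / Nat.choose (w - t + 2) 2 + 1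
          + sInf {m : ℕ | ∃ B : Finset (Finset (Fin n)), IsSteiner t w B ∧
              m = (Finset.powersetCard (t - 2) (Finset.univ : Finset (Fin n))).sup
                    (fun α => chromNum (mdGraph (derivedBlocks B α)))} ∧
      ∃ C : Finset (Fin n → ℕ),
        IsCWCode n (Nat.choose n t / Nat.choose w t) w (2 * w - t + 1) q C := by
  have hne : {m : ℕ | ∃ B : Finset (Finset (Fin n)), IsSteiner t w B ∧
      m = (Finset.powersetCard (t - 2) (Finset.univ : Finset (Fin n))).sup
        (fun α => chromNum (mdGraph (derivedBlocks B α)))}.Nonempty := ⟨_, B0, hB0, rfl⟩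
  obtain ⟨B, hB, hmeq⟩ := Nat.sInf_mem hne
  refine ⟨_, le_refl _, aux_code n w t ht htw hwn B hB _ ?_⟩
  intro p
  rw [hmeq]
  exact Finset.le_sup (f := fun α => chromNum (mdGraph (derivedBlocks B α)))
    (Finset.mem_powersetCard.mpr ⟨Finset.subset_univ _, winF_card (by omega) p⟩)
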